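/- Let F : ℝⁿ → ℝᴺ be differentiable at x̄ (with Fréchet derivative DF(x̄)), let d ∈ ℝᴺ, set r = d − F(x̄), and assume r ≠ 0. Let N ≥ 1 be a natural number. Then the reduced negative log-likelihood x ↦ N·log(2π·‖d − F(x)‖²/N) is differentiable at x̄ and its gradient at x̄ equals −(2N/‖r‖²)·(DF(x̄))*(r), where (DF(x̄))* is the adjoint of the continuous linear map DF(x̄) with respect to the Euclidean inner products. -/

import Mathlib

open Real

/-- gradient of the reduced Gaussian negative log-likelihood.
Let `F : ℝⁿ → ℝᴺ` be differentiable at `x₀`, `d ∈ ℝᴺ`, `r = d - F x₀ ≠ 0`, `N ≥ 1`.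
Then `x ↦ N·log(2π‖d - F x‖²/N)` is differentiable at `x₀` with gradient
`-(2N/‖r‖²) • (DF(x₀))* r`. -/
theorem stmt8 (n N : ℕ) (hN : 1 ≤ N)
    (F : EuclideanSpace ℝ (Fin n) → EuclideanSpace ℝ (Fin N))
    (x₀ : EuclideanSpace ℝ (Fin n)) (d : EuclideanSpace ℝ (Fin N))
    (hF : DifferentiableAt ℝ F x₀)
    (r : EuclideanSpace ℝ (Fin N)) (hr : r = d - F x₀) (hr0 : r ≠ 0) :
    DifferentiableAt ℝ
        (fun x => (N : ℝ) * Real.log (2 * π * ‖d - F x‖ ^ 2 / N)) x₀ ∧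
      gradient (fun x => (N : ℝ) * Real.log (2 * π * ‖d - F x‖ ^ 2 / N)) x₀ =
        -((2 * (N : ℝ)) / ‖r‖ ^ 2) • (ContinuousLinearMap.adjoint (fderiv ℝ F x₀)) r := by
  have hNpos : (0 : ℝ) < N := by exact_mod_cast hN
  have hr0' : (0:ℝ) < ‖r‖ := norm_pos_iff.mpr hr0
  have hrn : (0 : ℝ) < ‖r‖ ^ 2 := by positivity
  set DF := fderiv ℝ F x₀ with hDF
  have hF' : HasFDerivAt F DF x₀ := hF.hasFDerivAt
  have h1 : HasFDerivAt (fun x => d - F x) (-DF) x₀ := by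
    exact ((hasFDerivAt_const d x₀).sub hF').congr_fderiv (zero_sub _)
  have h2 : HasFDerivAt (fun x => ‖d - F x‖ ^ 2)
      (2 • (innerSL ℝ (d - F x₀)).comp (-DF)) x₀ := h1.norm_sq
  have h3 : HasFDerivAt (fun x => 2 * π * ‖d - F x‖ ^ 2 / N)
      ((N : ℝ)⁻¹ • ((2 * π) • (2 • (innerSL ℝ (d - F x₀)).comp (-DF)))) x₀ := by
    simp only [div_eq_mul_inv, mul_comm _ ((N : ℝ)⁻¹)]
    exact (h2.const_mul (2 * π)).const_mul _
  have hfx : 2 * π * ‖d - F x₀‖ ^ 2 / N ≠ 0 := by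
    rw [← hr]
    have := pi_pos
    positivity
  have h4 := (h3.log hfx).const_mul (N : ℝ)
  have hgrad : HasGradientAt (fun x => (N : ℝ) * Real.log (2 * π * ‖d - F x‖ ^ 2 / N))
      (-((2 * (N : ℝ)) / ‖r‖ ^ 2) • (ContinuousLinearMap.adjoint DF) r) x₀ := by
    rw [hasGradientAt_iff_hasFDerivAt]
    refine h4.congr_fderiv ?_
    symm
    apply ContinuousLinearMap.ext
    intro v
    simp only [InnerProductSpace.toDual_apply_apply, ContinuousLinearMap.smul_apply,
      ContinuousLinearMap.coe_smul', Pi.smul_apply, ContinuousLinearMap.comp_apply,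
      ContinuousLinearMap.neg_apply, innerSL_apply_apply, real_inner_smul_left,
      ContinuousLinearMap.adjoint_inner_left, smul_eq_mul, ← hr, inner_neg_right]
    have h2pi : (2 * π) ≠ 0 := by have := pi_pos; positivity
    have hfx' : (2 * π * ‖r‖ ^ 2 / (N:ℝ)) ≠ 0 := by rw [hr]; exact hfx
    field_simp
    ring
  exact ⟨hgrad.hasFDerivAt.differentiableAt, hgrad.gradient⟩
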